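/- Let T be a finite set of Wang tiles, σ_T the substitution on A = T × {→,↑,←,↓} constructed from T as follows: σ_base((a,d)) = {[(0,0),(a,d)]}, and the concatenation rules are the unordered dominoes of decorated tiles in which the underlying Wang tiles match on the shared edge and exactly one arrow points at the other cell, with σ_rule(pointing cell, pointed cell) = (1,0). Suppose (a_1,…,a_n) is a valid tiling of a cycle by T, placed at positions p_1,…,p_n (p_n = p_1, a_n = a_1), and let γ = (c_1,…,c_n) be the C_{σ_T}-loop where c_i = [p_i,(a_i,d_i)] and d_i is the direction from p_i to p_{i+1} for 1 ≤ i < n (and d_n = d_1). Then γ is a C_{σ_T}-loop and ω_{σ_T}(γ) = (n−1, 0) ≠ (0,0); in particular σ_T is not consistent. -/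

import Mathlib

open scoped Classical

/-- A combinatorial substitution on alphabet `A` with vectors in `V`:
a base rule sending each letter to a pattern, together with a deterministic
finite set of concatenation rules.  `rule t t' u = some v` encodes the
concatenation rule `(t, t', u) ↦ v`. -/
structure Subst (A : Type*) (V : Type*) [AddCommGroup V] where
  /-- the base rule -/
  base : A → Finset (V × A)
  /-- the image of a letter is a pattern: its cells have distinct vectors -/
  basePat : ∀ t : A, ∀ c ∈ base t, ∀ c' ∈ base t, c.1 = c'.1 → c = c'
  /-- the concatenation rules, as a partial function -/
  rule : A → A → V → Option V
  /-- there are finitely many concatenation rules -/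
  finiteRules : {u : V | ∃ t t', rule t t' u ≠ none}.Finite
  /-- determinism: no two rules with left-hand sides `(t,t',u)` and `(t,t',-u)` -/
  det : ∀ t t' u, (rule t t' u).isSome → (rule t t' (-u)).isSome → u = -u

/-- A pattern is a finite set of cells with pairwise distinct vectors. -/
def IsPattern {V A : Type*} (P : Finset (V × A)) : Prop :=
  ∀ c ∈ P, ∀ c' ∈ P, c.1 = c'.1 → c = c'

namespace Subst

variable {A V : Type*} [AddCommGroup V]

/-- `σ_rule(c, c')`: the relative position of the images of the two cells
`c`, `c'`, when some concatenation rule applies to them. -/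
def ruleVec (σ : Subst A V) (c c' : V × A) : Option V :=
  match σ.rule c.2 c'.2 (c'.1 - c.1) with
  | some v => some v
  | none => (σ.rule c'.2 c.2 (c.1 - c'.1)).map (fun v => -v)

/-- The image vector `ω_σ(γ)` of a path `γ`. -/
def omega (σ : Subst A V) (γ : List (V × A)) : V :=
  ((γ.zip γ.tail).map (fun p => (σ.ruleVec p.1 p.2).getD 0)).sum

/-- A `C_σ`-path: a nonempty sequence of cells in which any two consecutive
cells form a translated copy of a starting pattern of `σ`, and any two cells
with the same vector are equal. -/
def IsPath (σ : Subst A V) (γ : List (V × A)) : Prop :=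
  γ ≠ [] ∧ γ.Chain' (fun c c' => (σ.ruleVec c c').isSome) ∧
    ∀ c ∈ γ, ∀ c' ∈ γ, c.1 = c'.1 → c = c'

/-- A `C_σ`-path of the pattern `P`. -/
def IsPathOf (σ : Subst A V) (P : Finset (V × A)) (γ : List (V × A)) : Prop :=
  σ.IsPath γ ∧ ∀ c ∈ γ, c ∈ P

/-- A `C_σ`-loop of the pattern `P`. -/
def IsLoopOf (σ : Subst A V) (P : Finset (V × A)) (γ : List (V × A)) : Prop :=
  σ.IsPathOf P γ ∧ γ.head? = γ.getLast?

/-- `P` is `C_σ`-covered: any two of its cells are joined by a `C_σ`-path of `P`. -/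
def Covered (σ : Subst A V) (P : Finset (V × A)) : Prop :=
  ∀ c ∈ P, ∀ c' ∈ P,
    ∃ γ, σ.IsPathOf P γ ∧ γ.head? = some c ∧ γ.getLast? = some c'

/-- `σ` is consistent on `P`: any two `C_σ`-paths of `P` with the same first
and last cells have the same image vector. -/
def ConsistentOn (σ : Subst A V) (P : Finset (V × A)) : Prop :=
  ∀ γ γ' : List (V × A), σ.IsPathOf P γ → σ.IsPathOf P γ' →
    γ.head? = γ'.head? → γ.getLast? = γ'.getLast? → σ.omega γ = σ.omega γ'

/-- `σ` is consistent: it is consistent on every `C_σ`-covered pattern. -/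
def Consistent (σ : Subst A V) : Prop :=
  ∀ P : Finset (V × A), IsPattern P → σ.Covered P → σ.ConsistentOn P

/-- The support of the image of a letter. -/
noncomputable def supp (σ : Subst A V) (t : A) : Finset V :=
  (σ.base t).image Prod.fst

/-- `σ` is non-overlapping on `P`: the images of two distinct cells of `P`
joined by a `C_σ`-path of `P` have disjoint supports. -/
def NonOverlappingOn (σ : Subst A V) (P : Finset (V × A)) : Prop :=
  ∀ c ∈ P, ∀ c' ∈ P, c ≠ c' → ∀ γ, σ.IsPathOf P γ →
    γ.head? = some c → γ.getLast? = some c' →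
    ∀ b ∈ σ.supp c'.2, σ.omega γ + b ∉ σ.supp c.2

/-- `σ` is non-overlapping: it is non-overlapping on every `C_σ`-covered pattern. -/
def NonOverlapping (σ : Subst A V) : Prop :=
  ∀ P : Finset (V × A), IsPattern P → σ.Covered P → σ.NonOverlappingOn P

end Subst

/-- A Wang tile: a unit square with a color on each of its four edges. -/
structure WangTile (C : Type*) where
  north : C
  south : C
  east : C
  west : C

/-- The four arrow decorations. -/
inductive Dir : Type where
  | right : Dir
  | up : Dir
  | left : Dir
  | down : Dir
deriving DecidableEq

instance : Fintype Dir :=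
  ⟨{Dir.right, Dir.up, Dir.left, Dir.down}, fun x => by cases x <;> simp⟩

/-- The unit vector associated with a direction. -/
def dirVec : Dir → ℤ × ℤ
  | .right => (1, 0)
  | .up => (0, 1)
  | .left => (-1, 0)
  | .down => (0, -1)

/-- The colors of the Wang tiles `a` and `b` agree on the shared edge when
`b` is placed at position `u` relative to `a` (in particular `u` is a unit
vector). -/
def WangMatch {C : Type*} (a b : WangTile C) (u : ℤ × ℤ) : Prop :=
  (u = (1, 0) ∧ a.east = b.west) ∨ (u = (-1, 0) ∧ a.west = b.east) ∨
  (u = (0, 1) ∧ a.north = b.south) ∨ (u = (0, -1) ∧ a.south = b.north)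

/-- `T` admits a valid tiling of a cycle: a nontrivial cyclic sequence of
translates of tiles of `T` in which consecutive tiles are adjacent and match
in color. -/
def AdmitsCycle {C : Type*} (T : Finset (WangTile C)) : Prop :=
  ∃ (n : ℕ) (a : ℕ → WangTile C) (p : ℕ → ℤ × ℤ),
    5 ≤ n ∧ (∀ i < n, a i ∈ T) ∧
    (∀ i < n - 1, ∀ j < n - 1, p i = p j → i = j) ∧
    p (n - 1) = p 0 ∧ a (n - 1) = a 0 ∧
    ∀ i < n - 1, WangMatch (a i) (a (i + 1)) (p (i + 1) - p i)

/-- The substitution `σ_T` built from a Wang tile set `T`: letters are tiles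
of `T` decorated with an arrow, the base rule sends every letter to a single
cell at the origin, and the concatenation rules correspond exactly to the
matching dominoes of tiles of `T` in which exactly one arrow points at the
other cell, the image of the pointing cell being placed immediately to the
left of the image of the pointed cell. -/
noncomputable def sigmaT {C : Type*} (T : Finset (WangTile C)) :
    Subst (WangTile C × Dir) (ℤ × ℤ) where
  base t := {((0, 0), t)}
  basePat := by
    intro t c hc c' hc' _
    rw [Finset.mem_singleton] at hc hc'
    rw [hc, hc']
  rule t t' u :=
    if t.1 ∈ T ∧ t'.1 ∈ T ∧ WangMatch t.1 t'.1 u ∧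
        dirVec t.2 = u ∧ dirVec t'.2 ≠ -u
    then some (1, 0) else none
  finiteRules := by
    apply Set.Finite.subset (Set.finite_range dirVec)
    rintro u ⟨t, t', h⟩
    try simp only at h
    split_ifs at h with hc
    · exact ⟨t.2, hc.2.2.2.1⟩
    · exact absurd rfl h
  det := by
    intro t t' u h1 h2
    try simp only at h1 h2
    split_ifs at h1 with hA
    · split_ifs at h2 with hB
      · exact hA.2.2.2.1.symm.trans hB.2.2.2.1
      · simp at h2
    · simp at h1


private lemma omega_cons' {A V : Type*} [AddCommGroup V] (σ : Subst A V) (c c' : V × A)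
    (l : List (V × A)) :
    σ.omega (c :: c' :: l) = (σ.ruleVec c c').getD 0 + σ.omega (c' :: l) := by
  simp [Subst.omega]

private lemma omega_chain' {A V : Type*} [AddCommGroup V] (σ : Subst A V) (v : V) :
    ∀ l : List (V × A), l.Chain' (fun c c' => σ.ruleVec c c' = some v) →
      σ.omega l = (l.length - 1) • v
  | [], _ => by simp [Subst.omega]
  | [c], _ => by simp [Subst.omega]
  | c :: c' :: l, h => by
    simp only [List.Chain', List.isChain_cons_cons] at h
    rw [omega_cons', omega_chain' σ v (c' :: l) h.2, h.1]
    simp [succ_nsmul']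

private lemma ruleVec_symm' {A V : Type*} [AddCommGroup V] (σ : Subst A V) (c c' : V × A)
    (h : (σ.ruleVec c c').isSome) : (σ.ruleVec c' c).isSome := by
  unfold Subst.ruleVec at *
  cases h1 : σ.rule c'.2 c.2 (c.1 - c'.1) with
  | some v => simp [h1]
  | none =>
    cases h2 : σ.rule c.2 c'.2 (c'.1 - c.1) with
    | some v => simp [h1, h2]
    | none => simp [h1, h2] at h

private lemma ruleVec_eq_of_rule' {A V : Type*} [AddCommGroup V] (σ : Subst A V)
    (c c' : V × A) (v : V) (h : σ.rule c.2 c'.2 (c'.1 - c.1) = some v) :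
    σ.ruleVec c c' = some v := by
  unfold Subst.ruleVec
  rw [h]

private lemma chain'_range'' (R : ℕ → ℕ → Prop) :
    ∀ (m i : ℕ), (∀ k, i ≤ k → k + 1 < i + m → R k (k + 1)) →
      List.Chain' R (List.range' i m)
  | 0, i, _ => by simp [List.Chain']
  | 1, i, _ => by simp [List.Chain']
  | (m + 2), i, h => by
    rw [List.range'_succ, List.range'_succ]; unfold List.Chain'; rw [List.isChain_cons_cons]
    refine ⟨h i le_rfl (by omega), ?_⟩
    rw [← List.range'_succ]
    exact chain'_range'' R (m + 1) (i + 1) (fun k hk hk' => h k (by omega) (by omega))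

/-- Given a valid tiling of a cycle `(a_1, …, a_n)` of a
Wang tile set `T`, placed at positions `p_1, …, p_n`, decorate each tile
`a_i` with the arrow `dir i` pointing from `p_i` to `p_{i+1}`.  The resulting
sequence of cells `γ` is a `C_{σ_T}`-loop whose image vector is
`(n - 1, 0) ≠ (0,0)`; in particular `σ_T` is not consistent. -/
theorem cycle_gives_nonzero_loop {C : Type*} (T : Finset (WangTile C))
    (n : ℕ) (a : ℕ → WangTile C) (p : ℕ → ℤ × ℤ)
    (hn : 5 ≤ n) (hT : ∀ i < n, a i ∈ T)
    (hinj : ∀ i < n - 1, ∀ j < n - 1, p i = p j → i = j)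
    (hpcyc : p (n - 1) = p 0) (hacyc : a (n - 1) = a 0)
    (hmatch : ∀ i < n - 1, WangMatch (a i) (a (i + 1)) (p (i + 1) - p i))
    (dir : ℕ → Dir)
    (hdir : ∀ i < n - 1, dirVec (dir i) = p (i + 1) - p i)
    (hdircyc : dir (n - 1) = dir 0)
    (γ : List ((ℤ × ℤ) × (WangTile C × Dir)))
    (hγ : γ = (List.range n).map fun i => (p i, (a i, dir i))) :
    (sigmaT T).IsPath γ ∧ γ.head? = γ.getLast? ∧
      (sigmaT T).omega γ = ((n : ℤ) - 1, 0) ∧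
      ((((n : ℤ) - 1, (0 : ℤ)) : ℤ × ℤ) ≠ (0, 0)) ∧
      ¬ (sigmaT T).Consistent := by
  classical
  have hn1 : n - 1 + 1 = n := by omega
  have hruledef : ∀ (t t' : WangTile C × Dir) (u : ℤ × ℤ), (sigmaT T).rule t t' u =
      if t.1 ∈ T ∧ t'.1 ∈ T ∧ WangMatch t.1 t'.1 u ∧
          dirVec t.2 = u ∧ dirVec t'.2 ≠ -u
      then some (1, 0) else none := fun _ _ _ => rfl
  have hf0 : ((p (n - 1), (a (n - 1), dir (n - 1))) : (ℤ × ℤ) × (WangTile C × Dir))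
      = (p 0, (a 0, dir 0)) := by rw [hpcyc, hacyc, hdircyc]
  -- the key rule computation
  have hrule : ∀ i, i < n - 1 →
      (sigmaT T).ruleVec (p i, (a i, dir i)) (p (i + 1), (a (i + 1), dir (i + 1)))
        = some (1, 0) := by
    intro i hi
    have hcond : a i ∈ T ∧ a (i + 1) ∈ T ∧ WangMatch (a i) (a (i + 1)) (p (i + 1) - p i) ∧
        dirVec (dir i) = p (i + 1) - p i ∧ dirVec (dir (i + 1)) ≠ -(p (i + 1) - p i) := by
      refine ⟨hT i (by omega), hT (i + 1) (by omega), hmatch i hi, hdir i hi, ?_⟩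
      by_cases h : i + 1 < n - 1
      · rw [hdir (i + 1) h]
        intro heq
        rw [neg_sub] at heq
        have hpp : p (i + 1 + 1) = p i := sub_left_inj.mp heq
        rcases lt_or_eq_of_le (show i + 1 + 1 ≤ n - 1 by omega) with h2 | h2
        · have := hinj (i + 1 + 1) h2 i (by omega) hpp
          omega
        · have hp0 : p i = p 0 := by rw [← hpp, h2, hpcyc]
          have := hinj i (by omega) 0 (by omega) hp0
          omega
      · have hi' : i = n - 2 := by omega
        subst hi'
        rw [show n - 2 + 1 = n - 1 by omega, hdircyc, hdir 0 (by omega)]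
        intro heq
        rw [neg_sub, hpcyc] at heq
        have h12 : p 1 = p (n - 2) := sub_left_inj.mp heq
        have := hinj 1 (by omega) (n - 2) (by omega) h12
        omega
    have h1 : (sigmaT T).rule (a i, dir i) (a (i + 1), dir (i + 1)) (p (i + 1) - p i)
        = some (1, 0) := by
      rw [hruledef]
      exact if_pos hcond
    exact ruleVec_eq_of_rule' _ _ _ _ h1
  -- the chain of rules along γ
  have hchainv : γ.Chain'
      (fun c c' => (sigmaT T).ruleVec c c' = some ((1 : ℤ), (0 : ℤ))) := by
    unfold List.Chain'
    rw [hγ, List.isChain_map, show List.range n = List.range (n - 1 + 1) by rw [hn1]]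
    exact (List.isChain_range_succ _ (n - 1)).mpr (fun m hm => hrule m hm)
  have hchain : γ.Chain' (fun c c' => ((sigmaT T).ruleVec c c').isSome) :=
    hchainv.imp (fun x y h => by rw [h]; rfl)
  -- distinctness of cells with equal vectors
  have hfp : ∀ i, i < n → ∀ j, j < n → p i = p j →
      ((p i, (a i, dir i)) : (ℤ × ℤ) × (WangTile C × Dir)) = (p j, (a j, dir j)) := by
    intro i hi j hj hp
    have rep : ∀ k, k < n → ∃ k', k' < n - 1 ∧
        ((p k, (a k, dir k)) : (ℤ × ℤ) × (WangTile C × Dir)) = (p k', (a k', dir k')) ∧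
        p k = p k' := by
      intro k hk
      by_cases h : k = n - 1
      · exact ⟨0, by omega, by rw [h]; exact hf0, by rw [h, hpcyc]⟩
      · exact ⟨k, by omega, rfl, rfl⟩
    obtain ⟨i', hi', hfi, hpi⟩ := rep i hi
    obtain ⟨j', hj', hfj, hpj⟩ := rep j hj
    have hij : i' = j' := hinj i' hi' j' hj' (by rw [← hpi, ← hpj, hp])
    rw [hfi, hfj, hij]
  have hdist : ∀ c ∈ γ, ∀ c' ∈ γ, c.1 = c'.1 → c = c' := by
    intro c hc c' hc' hcc
    rw [hγ, List.mem_map] at hc hc'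
    obtain ⟨i, hi, rfl⟩ := hc
    obtain ⟨j, hj, rfl⟩ := hc'
    rw [List.mem_range] at hi hj
    exact hfp i hi j hj hcc
  have hne : γ ≠ [] := by
    rw [hγ]
    simp only [ne_eq, List.map_eq_nil_iff, List.range_eq_nil]
    omega
  have hpathγ : (sigmaT T).IsPath γ := ⟨hne, hchain, hdist⟩
  have hγhead : γ.head? = some (p 0, (a 0, dir 0)) := by
    rw [hγ, show List.range n = List.range (n - 1 + 1) by rw [hn1],
      List.range_succ_eq_map]
    simp
  have hγlast : γ.getLast? = some (p 0, (a 0, dir 0)) := by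
    rw [hγ, show List.range n = List.range (n - 1 + 1) by rw [hn1],
      List.range_succ, List.map_append]
    simp [hf0]
  have hlen : γ.length = n := by rw [hγ]; simp
  have homega : (sigmaT T).omega γ = ((n : ℤ) - 1, 0) := by
    rw [omega_chain' _ _ γ hchainv, hlen]
    have h5 : 1 ≤ n := by omega
    ext
    · simp [nsmul_eq_mul]
      push_cast [Nat.cast_sub h5]
      ring
    · simp
  have hnz : (((n : ℤ) - 1, (0 : ℤ)) : ℤ × ℤ) ≠ (0, 0) := by
    intro h
    rw [Prod.mk.injEq] at h
    omega
  refine ⟨hpathγ, hγhead.trans hγlast.symm, homega, hnz, ?_⟩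
  -- inconsistency
  intro hcons
  set P := γ.toFinset with hP
  have hmemγP : ∀ c ∈ γ, c ∈ P := fun c hc => List.mem_toFinset.mpr hc
  have hmemP : ∀ i, i < n → ((p i, (a i, dir i)) : (ℤ × ℤ) × (WangTile C × Dir)) ∈ P := by
    intro i hi
    exact hmemγP _ (by rw [hγ]; exact List.mem_map.mpr ⟨i, List.mem_range.mpr hi, rfl⟩)
  have hPat : IsPattern P := fun c hc c' hc' =>
    hdist c (List.mem_toFinset.mp hc) c' (List.mem_toFinset.mp hc')
  -- segments of γ are paths of P
  have hseg : ∀ i j, i ≤ j → j < n →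
      (sigmaT T).IsPathOf P
        ((List.range' i (j - i + 1)).map fun k => (p k, (a k, dir k))) ∧
      ((List.range' i (j - i + 1)).map fun k => (p k, (a k, dir k))).head?
        = some (p i, (a i, dir i)) ∧
      ((List.range' i (j - i + 1)).map fun k => (p k, (a k, dir k))).getLast?
        = some (p j, (a j, dir j)) := by
    intro i j hij hj
    have hmem : ∀ c ∈ (List.range' i (j - i + 1)).map fun k => (p k, (a k, dir k)),
        c ∈ γ := by
      intro c hc
      rw [List.mem_map] at hc
      obtain ⟨k, hk, rfl⟩ := hc
      rw [List.mem_range'_1] at hk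
      rw [hγ]
      exact List.mem_map.mpr ⟨k, List.mem_range.mpr (by omega), rfl⟩
    refine ⟨⟨⟨by simp, ?_, fun c hc c' hc' h => hdist c (hmem c hc) c' (hmem c' hc') h⟩,
      fun c hc => hmemγP c (hmem c hc)⟩, ?_, ?_⟩
    · unfold List.Chain'
      rw [List.isChain_map]
      refine chain'_range'' _ (j - i + 1) i (fun k hk hk' => ?_)
      have hkn : k < n - 1 := by omega
      rw [hrule k hkn]
      rfl
    · rw [List.range'_succ]
      simp
    · rw [List.range'_concat, List.map_append]
      simp only [List.map_cons, List.map_nil, List.getLast?_concat]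
      rw [show i + 1 * (j - i) = j by omega]
  -- P is covered
  have hrep : ∀ c ∈ P, ∃ i, i < n - 1 ∧
      c = ((p i, (a i, dir i)) : (ℤ × ℤ) × (WangTile C × Dir)) := by
    intro c hc
    rw [hP, List.mem_toFinset, hγ, List.mem_map] at hc
    obtain ⟨k, hk, rfl⟩ := hc
    rw [List.mem_range] at hk
    by_cases h : k = n - 1
    · exact ⟨0, by omega, by rw [h]; exact hf0⟩
    · exact ⟨k, by omega, rfl⟩
  have hcov : (sigmaT T).Covered P := by
    intro c hc c' hc'
    obtain ⟨i, hi, rfl⟩ := hrep c hc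
    obtain ⟨j, hj, rfl⟩ := hrep c' hc'
    rcases le_total i j with h | h
    · obtain ⟨hpath, hh, hl⟩ := hseg i j h (by omega)
      exact ⟨_, hpath, hh, hl⟩
    · obtain ⟨⟨⟨hne', hch', hdi'⟩, hmem'⟩, hh, hl⟩ := hseg j i h (by omega)
      refine ⟨((List.range' j (i - j + 1)).map fun k => (p k, (a k, dir k))).reverse,
        ⟨⟨?_, ?_, ?_⟩, ?_⟩, ?_, ?_⟩
      · simp only [ne_eq, List.reverse_eq_nil_iff]
        exact hne'
      · unfold List.Chain'
        rw [List.isChain_reverse]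
        exact hch'.imp (fun x y hxy => ruleVec_symm' _ x y hxy)
      · intro cc hcc dd hdd
        exact hdi' cc (List.mem_reverse.mp hcc) dd (List.mem_reverse.mp hdd)
      · intro cc hcc
        exact hmem' cc (List.mem_reverse.mp hcc)
      · rw [List.head?_reverse]
        exact hl
      · rw [List.getLast?_reverse]
        exact hh
  -- the two paths with equal endpoints and different image vectors
  have h1path : (sigmaT T).IsPathOf P [(p 0, (a 0, dir 0))] := by
    refine ⟨⟨by simp, by simp [List.Chain'], ?_⟩, ?_⟩
    · intro c hc c' hc' _
      simp only [List.mem_singleton] at hc hc'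
      rw [hc, hc']
    · intro c hc
      simp only [List.mem_singleton] at hc
      rw [hc]
      exact hmemP 0 (by omega)
  have heq := hcons P hPat hcov γ [(p 0, (a 0, dir 0))]
    ⟨hpathγ, hmemγP⟩ h1path (by rw [hγhead]; rfl) (by rw [hγlast]; rfl)
  rw [homega] at heq
  simp only [Subst.omega, List.zip_nil_right, List.map_nil, List.sum_nil,
    List.tail_cons] at heq
  have h0 := congrArg Prod.fst heq
  simp only [Prod.fst_zero] at h0
  omega
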